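/- Let V be a finite \F_r-linear subspace of an algebraic closure of \F_r of dimension n over \F_r. Then the polynomial f_V = \prod_{\alpha \in V}(x - \alpha) is a monic squarefree r-additive polynomial of degree r^n. -/

import Mathlib

open Polynomial Finset

lemma prod_univ_X_sub_C (F : Type*) [Field F] [Fintype F] :
    ∏ a : F, (X - C a) = X ^ Fintype.card F - X := by
  classical
  have hq : 1 < Fintype.card F := Fintype.one_lt_card
  have hm : (X ^ Fintype.card F - X : F[X]).Monic := by
    apply monic_X_pow_sub
    simpa using hq
  have hd : (X ^ Fintype.card F - X : F[X]).natDegree = Fintype.card F :=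
    FiniteField.X_pow_card_sub_X_natDegree_eq F hq
  have hroots := FiniteField.roots_X_pow_card_sub_X F
  have := prod_multiset_X_sub_C_of_monic_of_roots_card_eq hm (by rw [hroots, hd]; simp)
  rw [← this, hroots]
  rfl

lemma prod_shift_smul (F K : Type*) [Field F] [Fintype F] [Field K] [Algebra F K]
    (b : K) (hb : b ≠ 0) (q : K[X]) :
    ∏ c : F, (q - C (algebraMap F K c * b)) =
      q ^ Fintype.card F - C (b ^ (Fintype.card F - 1)) * q := by
  classical
  set r := Fintype.card F with hr
  have hr1 : 1 ≤ r := Fintype.card_pos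
  let ψ : F[X] →+* K[X] := eval₂RingHom (C.comp (algebraMap F K)) (C b⁻¹ * q)
  have key := congrArg ψ (prod_univ_X_sub_C F)
  rw [map_prod, map_sub, map_pow] at key
  simp only [ψ, coe_eval₂RingHom, eval₂_X, eval₂_sub, eval₂_C, RingHom.comp_apply] at key
  have key2 := congrArg (fun z => C (b ^ r) * z) key
  calc ∏ c : F, (q - C (algebraMap F K c * b))
      = ∏ c : F, (C b * (C b⁻¹ * q - C (algebraMap F K c))) := by
        apply Finset.prod_congr rfl
        intro c _
        rw [mul_sub, ← mul_assoc, ← C_mul, mul_inv_cancel₀ hb, C_1, one_mul, ← C_mul,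
          mul_comm b]
    _ = C (b ^ r) * ∏ c : F, (C b⁻¹ * q - C (algebraMap F K c)) := by
        rw [Finset.prod_mul_distrib, Finset.prod_const, card_univ, ← hr, ← C_pow]
    _ = C (b ^ r) * ((C b⁻¹ * q) ^ r - C b⁻¹ * q) := by rw [key]
    _ = q ^ r - C (b ^ (r - 1)) * q := by
        rw [mul_sub, mul_pow, ← mul_assoc, ← mul_assoc, ← C_pow, ← C_mul, ← C_mul]
        rw [show b ^ r * b⁻¹ ^ r = 1 by rw [← mul_pow, mul_inv_cancel₀ hb, one_pow],
          show b ^ r * b⁻¹ = b ^ (r - 1) by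
            rw [← pow_sub_one_mul (by omega : r ≠ 0) b, mul_assoc,
              mul_inv_cancel₀ hb, mul_one],
          C_1, one_mul]

lemma additive_shift (K : Type*) [Field K] (p : ℕ) [Fact p.Prime] [CharP K p]
    (e k : ℕ) (a : ℕ → K) (w : K) :
    eval₂ C (X - C w) (∑ i ∈ Finset.range k, C (a i) * X ^ (p ^ e) ^ i) =
      (∑ i ∈ Finset.range k, C (a i) * X ^ (p ^ e) ^ i) -
        C (eval w (∑ i ∈ Finset.range k, C (a i) * X ^ (p ^ e) ^ i)) := by
  classical
  rw [eval₂_finset_sum, eval_finset_sum]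
  simp only [eval₂_mul, eval₂_C, eval₂_pow, eval₂_X, eval_mul, eval_C, eval_pow, eval_X]
  rw [map_sum (C : K →+* K[X]) _ (Finset.range k), ← Finset.sum_sub_distrib]
  apply Finset.sum_congr rfl
  intro i _
  have hpow : ((p : ℕ) ^ e) ^ i = p ^ (e * i) := by rw [← pow_mul]
  rw [hpow, sub_pow_char_pow, mul_sub, C_mul, C_pow]

lemma charP_of_card (F : Type*) [Field F] [Fintype F] (p e : ℕ) [Fact p.Prime]
    (he : 1 ≤ e) (hF : Fintype.card F = p ^ e) : CharP F p := by
  obtain ⟨c, hc⟩ := CharP.exists F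
  haveI := hc
  have hcp : c.Prime := CharP.char_is_prime F c
  have : (((p : ℕ) ^ e : ℕ) : F) = 0 := by rw [← hF]; exact FiniteField.cast_card_eq_zero F
  have hdvd : c ∣ p ^ e := (CharP.cast_eq_zero_iff F c _).mp this
  have : c = p := by
    have := hcp.dvd_of_dvd_pow hdvd
    exact (Nat.prime_dvd_prime_iff_eq hcp (Fact.out)).mp this
  rwa [this] at hc

lemma subspace_poly_key
    (p e r : ℕ) [Fact p.Prime] (he : 1 ≤ e) (hr : r = p ^ e)
    (F : Type*) [Field F] [Fintype F] (hF : Fintype.card F = r)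
    (m : ℕ) :
    ∀ (g : Fin m → AlgebraicClosure F), LinearIndependent F g →
    ∀ (T : Finset (AlgebraicClosure F)),
      (↑T : Set (AlgebraicClosure F)) =
        (Submodule.span F (Set.range g) : Set (AlgebraicClosure F)) →
      ∃ a : ℕ → AlgebraicClosure F, a m = 1 ∧
        ∏ α ∈ T, (X - C α) = ∑ i ∈ Finset.range (m + 1), C (a i) * X ^ r ^ i := by
  classical
  subst hr
  induction m with
  | zero =>
    intro g hg T hT
    have hrange : Set.range g = ∅ := Set.range_eq_empty g
    rw [hrange, Submodule.span_empty] at hT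
    have hT0 : T = {0} := by
      apply Finset.coe_injective
      rw [hT]
      simp
    refine ⟨fun _ => 1, rfl, ?_⟩
    rw [hT0]
    simp
  | succ m IH =>
    intro g hg T hT
    haveI : CharP F p := charP_of_card F p e he (by rw [hF])
    haveI : CharP (AlgebraicClosure F) p := charP_of_injective_algebraMap (algebraMap F (AlgebraicClosure F)).injective p
    set β : AlgebraicClosure F := g (Fin.last m) with hβdef
    set g' : Fin m → AlgebraicClosure F := g ∘ Fin.castSucc with hg'def
    have hg' : LinearIndependent F g' := hg.comp _ (Fin.castSucc_injective m)
    set V' : Submodule F (AlgebraicClosure F) := Submodule.span F (Set.range g') with hV'def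
    have hβ : β ∉ V' := by
      have h1 : Fin.last m ∉ Set.range (Fin.castSucc : Fin m → Fin (m + 1)) := by
        rintro ⟨j, hj⟩
        have h2 := congrArg Fin.val hj
        have h3 := j.isLt
        simp only [Fin.coe_castSucc, Fin.val_last] at h2
        omega
      have := hg.notMem_span_image h1
      rwa [← Set.range_comp] at this
    have hsub : (V' : Set (AlgebraicClosure F)) ⊆ ↑T := by
      rw [hT]
      exact Submodule.span_mono (Set.range_comp_subset_range _ _)
    have hfin : (V' : Set (AlgebraicClosure F)).Finite := T.finite_toSet.subset hsub
    set T' : Finset (AlgebraicClosure F) := hfin.toFinset with hT'def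
    have hT' : (↑T' : Set (AlgebraicClosure F)) = (V' : Set (AlgebraicClosure F)) := hfin.coe_toFinset
    obtain ⟨a, ham, hGa⟩ := IH g' hg' T' hT'
    set G : (AlgebraicClosure F)[X] := ∏ α ∈ T', (X - C α) with hGdef
    set b : AlgebraicClosure F := eval β G with hbdef
    have hb : b ≠ 0 := by
      rw [hbdef, hGdef, eval_prod]
      rw [Finset.prod_ne_zero_iff]
      intro α hα
      simp only [eval_sub, eval_X, eval_C, sub_ne_zero]
      rintro rfl
      exact hβ (by rw [← SetLike.mem_coe, ← hT']; exact_mod_cast hα)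
    -- the decomposition of T
    set φ : F × AlgebraicClosure F → AlgebraicClosure F := fun x => x.2 + x.1 • β with hφdef
    have hVmem : ∀ v ∈ V', ∀ c : F, φ (c, v) ∈ Submodule.span F (Set.range g) := by
      intro v hv c
      refine Submodule.add_mem _ ?_ (Submodule.smul_mem _ _ (Submodule.subset_span ⟨Fin.last m, rfl⟩))
      exact Submodule.span_mono (Set.range_comp_subset_range _ _) hv
    have hrangeg : Set.range g = Set.range g' ∪ {β} := by
      ext y
      constructor
      · rintro ⟨i, rfl⟩
        rcases Fin.eq_castSucc_or_eq_last i with ⟨j, rfl⟩ | rfl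
        · exact Or.inl ⟨j, rfl⟩
        · exact Or.inr rfl
      · rintro (⟨j, rfl⟩ | rfl)
        · exact ⟨Fin.castSucc j, rfl⟩
        · exact ⟨Fin.last m, rfl⟩
    have himg : Finset.image φ (Finset.univ ×ˢ T') = T := by
      apply Finset.coe_injective
      rw [Finset.coe_image, Finset.coe_product, Finset.coe_univ, hT', hT]
      ext x
      constructor
      · rintro ⟨⟨c, v⟩, ⟨-, hv⟩, rfl⟩
        exact hVmem v hv c
      · intro hx
        rw [hrangeg, Submodule.span_union] at hx
        obtain ⟨v, hv, w, hw, rfl⟩ := Submodule.mem_sup.mp hx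
        obtain ⟨c, rfl⟩ := Submodule.mem_span_singleton.mp hw
        exact ⟨(c, v), ⟨Set.mem_univ _, hv⟩, rfl⟩
    have hinj : Set.InjOn φ ↑((Finset.univ : Finset F) ×ˢ T') := by
      rintro ⟨c₁, v₁⟩ h₁ ⟨c₂, v₂⟩ h₂ hφeq
      simp only [Finset.coe_product, Set.mem_prod, Finset.mem_coe] at h₁ h₂
      have hv₁ : v₁ ∈ V' := by rw [← SetLike.mem_coe, ← hT']; exact_mod_cast h₁.2
      have hv₂ : v₂ ∈ V' := by rw [← SetLike.mem_coe, ← hT']; exact_mod_cast h₂.2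
      simp only [hφdef] at hφeq
      by_cases hc : c₁ = c₂
      · subst hc
        have : v₁ = v₂ := by
          have := hφeq
          exact add_right_cancel this
        simp [this]
      · exfalso
        apply hβ
        have hβeq : (c₁ - c₂) • β = v₂ - v₁ := by
          rw [sub_smul]
          linear_combination (norm := module) hφeq
        have : β = (c₁ - c₂)⁻¹ • ((c₁ - c₂) • β) := by
          rw [smul_smul, inv_mul_cancel₀ (sub_ne_zero.mpr hc), one_smul]
        rw [this, hβeq]
        exact Submodule.smul_mem _ _ (Submodule.sub_mem _ hv₂ hv₁)
    have hsplit : ∏ α ∈ T, (X - C α) =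
        ∏ c : F, ∏ v ∈ T', (X - C (v + c • β)) := by
      rw [← himg, Finset.prod_image (fun x hx y hy h => hinj hx hy h)]
      rw [Finset.prod_product]
    have hinner : ∀ c : F, ∏ v ∈ T', (X - C (v + c • β)) =
        G - C (algebraMap F (AlgebraicClosure F) c * b) := by
      intro c
      have h1 : ∏ v ∈ T', (X - C (v + c • β)) = eval₂ C (X - C (c • β)) G := by
        rw [hGdef, eval₂_finset_prod]
        refine Finset.prod_congr rfl fun v _ => ?_
        rw [eval₂_sub, eval₂_X, eval₂_C, sub_sub, ← C_add, add_comm]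
      have h2 : eval (c • β) G = algebraMap F (AlgebraicClosure F) c * b := by
        rw [hbdef, hGa, eval_finset_sum, eval_finset_sum, Finset.mul_sum]
        refine Finset.sum_congr rfl fun i _ => ?_
        simp only [eval_mul, eval_C, eval_pow, eval_X]
        rw [Algebra.smul_def, mul_pow, ← map_pow]
        rw [show c ^ (p ^ e) ^ i = c from by rw [← hF]; exact FiniteField.pow_card_pow i c]
        ring
      rw [h1, hGa, additive_shift, ← hGa, h2]
    have hGr : G ^ (p ^ e) = ∑ i ∈ Finset.range (m + 1),
        C (a i ^ p ^ e) * X ^ (p ^ e) ^ (i + 1) := by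
      rw [hGa, sum_pow_char_pow]
      refine Finset.sum_congr rfl fun i _ => ?_
      rw [mul_pow, ← C_pow, ← pow_mul, ← pow_succ]
    refine ⟨fun j => (if j = 0 then 0 else a (j - 1) ^ (p ^ e)) -
      b ^ (p ^ e - 1) * (if j ≤ m then a j else 0), ?_, ?_⟩
    · simp [ham]
    · calc ∏ α ∈ T, (X - C α)
          = ∏ c : F, (G - C (algebraMap F (AlgebraicClosure F) c * b)) := by
            rw [hsplit]; exact Finset.prod_congr rfl fun c _ => hinner c
        _ = G ^ (p ^ e) - C (b ^ (p ^ e - 1)) * G := by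
            have := prod_shift_smul F (AlgebraicClosure F) b hb G
            rwa [hF] at this
        _ = _ := by
            have hfirst : ∑ j ∈ Finset.range (m + 1 + 1),
                C (if j = 0 then (0 : AlgebraicClosure F) else a (j - 1) ^ (p ^ e)) *
                  X ^ (p ^ e) ^ j = G ^ (p ^ e) := by
              rw [Finset.sum_range_succ', hGr]
              simp [Nat.add_sub_cancel]
            have hsecond : ∑ j ∈ Finset.range (m + 1 + 1),
                C (b ^ (p ^ e - 1) * (if j ≤ m then a j else 0)) * X ^ (p ^ e) ^ j =
                C (b ^ (p ^ e - 1)) * G := by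
              rw [Finset.sum_range_succ, if_neg (by omega), mul_zero, map_zero, zero_mul,
                add_zero, hGa, Finset.mul_sum]
              refine Finset.sum_congr rfl fun j hj => ?_
              rw [if_pos (by exact Nat.lt_succ_iff.mp (Finset.mem_range.mp hj)), C_mul]
              ring
            rw [← hfirst, ← hsecond, ← Finset.sum_sub_distrib]
            refine Finset.sum_congr rfl fun j _ => ?_
            rw [map_sub, sub_mul]


/-- For an `n`-dimensional `𝔽_r`-subspace `V` of an algebraic closure of `𝔽_r` (with
finite underlying set `S`), the polynomial `f_V = ∏_{α ∈ V} (x - α)` is a monic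
squarefree `r`-additive polynomial of degree `rⁿ`. -/
theorem subspace_polynomial_is_additive
    (p e r : ℕ) [Fact p.Prime] (he : 1 ≤ e) (hr : r = p ^ e)
    (F : Type*) [Field F] [Fintype F] (hF : Fintype.card F = r)
    (n : ℕ) (V : Submodule F (AlgebraicClosure F)) (hV : Module.finrank F V = n)
    (S : Finset (AlgebraicClosure F)) (hS : ↑S = (V : Set (AlgebraicClosure F))) :
    (∏ α ∈ S, (X - C α)).Monic ∧ Squarefree (∏ α ∈ S, (X - C α)) ∧
      (∏ α ∈ S, (X - C α)).natDegree = r ^ n ∧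
      ∃ a : ℕ → AlgebraicClosure F, a n = 1 ∧
        ∏ α ∈ S, (X - C α) = ∑ i ∈ Finset.range (n + 1), C (a i) * X ^ r ^ i := by
  classical
  have hVfin : (V : Set (AlgebraicClosure F)).Finite := hS ▸ S.finite_toSet
  haveI : Finite ↥V := hVfin
  haveI : Module.Finite F ↥V := Module.Finite.of_finite
  -- monic
  have hmonic : (∏ α ∈ S, (X - C α)).Monic :=
    monic_prod_of_monic _ _ fun α _ => monic_X_sub_C α
  -- squarefree
  have hsf : Squarefree (∏ α ∈ S, (X - C α)) := by
    have hsep : (∏ α ∈ S, (X - C (id α))).Separable :=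
      separable_prod_X_sub_C_iff'.mpr fun x _ y _ h => h
    exact (by simpa using hsep : (∏ α ∈ S, (X - C α)).Separable).squarefree
  -- degree
  have hcardV : Nat.card ↥V = S.card := by
    have h2 : Nat.card ↥(V : Set (AlgebraicClosure F)) = S.card := by
      rw [Nat.card_coe_set_eq, ← hS, Set.ncard_coe_finset]
    exact h2
  haveI : Fintype ↥V := Fintype.ofFinite _
  have hcard : S.card = r ^ n := by
    rw [← hcardV, Nat.card_eq_fintype_card, Module.card_eq_pow_finrank (K := F) (V := ↥V), hF, hV]
  have hdeg : (∏ α ∈ S, (X - C α)).natDegree = r ^ n := by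
    rw [natDegree_prod_of_monic _ _ fun α _ => monic_X_sub_C α]
    simp [hcard]
  refine ⟨hmonic, hsf, hdeg, ?_⟩
  -- additive form
  set bV := (Module.finBasis F ↥V).reindex (finCongr hV) with hbV
  set g : Fin n → AlgebraicClosure F := fun i => ((bV i : ↥V) : AlgebraicClosure F) with hgdef
  have hg : LinearIndependent F g :=
    bV.linearIndependent.map' V.subtype (Submodule.ker_subtype V)
  have hspan : Submodule.span F (Set.range g) = V := by
    have : Set.range g = V.subtype '' Set.range bV := by
      rw [← Set.range_comp]; rfl
    rw [this, Submodule.span_image, bV.span_eq, Submodule.map_subtype_top]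
  exact subspace_poly_key p e r he hr F hF n g hg S (by rw [hspan]; exact hS)
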